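/- Let d ∈ (0,1] with n := 1/d ∈ ℕ and N ∈ ℕ with N/n ∈ ℕ. Let F : ℝ² → ℝ² satisfy F(-y) = -F(y) for all y, and F(y) = 0 whenever the torus distance |y| ≥ 1/2. Then the configuration of N particles x̄_{i,m} = (i·d, m·n/N) for i = 0,…,n-1 and m = 0,…,N/n - 1, i.e. n equidistant vertical lines each carrying N/n uniformly spaced particles, is a steady state of the system dx_j/dt = (1/N) Σ_{k≠j} F(x_j - x_k) on the torus 𝕋²: for each particle the sum of forces exerted by all other particles vanishes. -/

import Mathlib

open Finset

/-- Representative in `[-1/2, 1/2)` of a real number modulo `1`. -/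
noncomputable def torusRep (t : ℝ) : ℝ := Int.fract (t + 1/2) - 1/2

/-- Difference of two points of the unit torus `𝕋² = [0,1)²`, taken with
coordinates in `[-1/2, 1/2)`. -/
noncomputable def torusDiff (x y : EuclideanSpace ℝ (Fin 2)) : EuclideanSpace ℝ (Fin 2) :=
  WithLp.toLp 2 (fun i => torusRep (x i - y i))

lemma torusRep_add_int (t : ℝ) (k : ℤ) : torusRep (t + k) = torusRep t := by
  unfold torusRep
  rw [show t + (k:ℝ) + 1/2 = (t + 1/2) + k by ring, Int.fract_add_intCast]

lemma torusRep_neg_of_ne (t : ℝ) (h : torusRep t ≠ -(1/2)) : torusRep (-t) = -torusRep t := by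
  have hf : Int.fract (t + 1/2) ≠ 0 := by
    intro h0; apply h; unfold torusRep; rw [h0]; ring
  unfold torusRep at *
  rw [show -t + 1/2 = -(t + 1/2) + 1 by ring, Int.fract_add_one, Int.fract_neg hf]
  ring

lemma torusRep_neg_of_eq (t : ℝ) (h : torusRep t = -(1/2)) : torusRep (-t) = -(1/2) := by
  have hf : Int.fract (t + 1/2) = 0 := by
    unfold torusRep at h; linarith
  unfold torusRep
  rw [show -t + 1/2 = -(t + 1/2) + 1 by ring, Int.fract_add_one, Int.fract_neg_eq_zero.mpr hf]
  ring

lemma torusRep_eq_zero (t : ℝ) (h : torusRep t = 0) : ∃ k : ℤ, t = k := by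
  refine ⟨⌊t + 1/2⌋, ?_⟩
  unfold torusRep Int.fract at h
  linarith

lemma fin_cong (L : ℕ) [NeZero L] (a b : Fin L) :
    ∃ k : ℤ, (((a + a - b : Fin L) : ℕ) : ℤ) = (a:ℕ) + (a:ℕ) - (b:ℕ) + L * k := by
  have hb : (b:ℕ) ≤ L := le_of_lt b.isLt
  have h1 : ((a + a - b : Fin L) : ℕ) = (((a:ℕ) + (a:ℕ)) % L + (L - (b:ℕ))) % L := by
    simp [Fin.sub_def, Fin.add_def, Nat.add_comm]
  set A : ℤ := (a:ℕ) + (a:ℕ) with hA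
  set B : ℤ := ((b:ℕ):ℤ) with hB
  have h2 : (((a + a - b : Fin L) : ℕ) : ℤ) = (A % L + (L - B)) % L := by
    rw [h1]; push_cast [Nat.cast_sub hb, hA, hB]; ring_nf
  have h3 : (A % L + (L - B)) % L = (A - B) % L := by
    rw [Int.add_emod, Int.emod_emod_of_dvd _ dvd_rfl, ← Int.add_emod,
      show A + (L - B) = (A - B) + (L:ℤ) * 1 by ring, Int.add_mul_emod_self_left]
  have h4 : (L:ℤ) ∣ ((A - B) - (((a + a - b : Fin L) : ℕ) : ℤ)) := by
    rw [h2, h3]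
    exact Int.ModEq.dvd (Int.emod_emod_of_dvd _ dvd_rfl)
  obtain ⟨k, hk⟩ := h4
  exact ⟨-k, by push_cast; linarith⟩

lemma key_coord (L : ℕ) [NeZero L] (per : ℝ) (hper : (L:ℝ) * per = 1) (a b : Fin L) :
    torusRep (((a:ℕ):ℝ) * per - (((a + a - b : Fin L):ℕ):ℝ) * per)
      = torusRep (-(((a:ℕ):ℝ) * per - ((b:ℕ):ℝ) * per)) := by
  obtain ⟨k, hk⟩ := fin_cong L a b
  have h1 : (((a + a - b : Fin L):ℕ):ℝ) = ((a:ℕ):ℝ) + ((a:ℕ):ℝ) - ((b:ℕ):ℝ) + (L:ℝ) * (k:ℝ) := by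
    exact_mod_cast congrArg (fun z : ℤ => (z : ℝ)) hk
  rw [h1, show ((a:ℕ):ℝ) * per - (((a:ℕ):ℝ) + ((a:ℕ):ℝ) - ((b:ℕ):ℝ) + (L:ℝ) * (k:ℝ)) * per
      = -(((a:ℕ):ℝ) * per - ((b:ℕ):ℝ) * per) + ((-k : ℤ):ℝ) * ((L:ℝ) * per) by push_cast; ring,
    hper, mul_one, torusRep_add_int]

lemma coord_le_norm (y : EuclideanSpace ℝ (Fin 2)) (i : Fin 2) : |y i| ≤ ‖y‖ := by
  rw [EuclideanSpace.norm_eq]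
  rw [show |y i| = Real.sqrt (‖y i‖^2) by
    rw [Real.norm_eq_abs, Real.sqrt_sq (abs_nonneg _)]]
  exact Real.sqrt_le_sqrt (Finset.single_le_sum (f := fun j => ‖y j‖^2) (fun j _ => sq_nonneg _) (mem_univ i))

lemma int_abs_lt_one (k : ℤ) (h : |(k:ℝ)| < 1) : k = 0 := by
  have h2 : |k| < 1 := by exact_mod_cast (by rwa [← Int.cast_abs] at h : ((|k|:ℤ):ℝ) < 1)
  rw [abs_lt] at h2
  omega

theorem stmt_5 (d : ℝ) (hd : 0 < d) (hd1 : d ≤ 1) (n : ℕ) (hn : (n : ℝ) = 1 / d)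
    (N m : ℕ) (hm : N = n * m) (hmpos : 0 < m)
    (F : EuclideanSpace ℝ (Fin 2) → EuclideanSpace ℝ (Fin 2))
    (hanti : ∀ y, F (-y) = -F y)
    (hcut : ∀ y : EuclideanSpace ℝ (Fin 2), (1/2 : ℝ) ≤ ‖y‖ → F y = 0)
    (x : Fin n × Fin m → EuclideanSpace ℝ (Fin 2))
    (hx : ∀ p : Fin n × Fin m, x p = ![(p.1 : ℝ) * d, (p.2 : ℝ) * (n : ℝ) / N]) :
    ∀ p : Fin n × Fin m,
      (1 / (N : ℝ)) • ∑ q ∈ univ.filter (· ≠ p), F (torusDiff (x p) (x q)) = 0 := by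
  have hn0 : (0:ℝ) < (n:ℝ) := by rw [hn]; positivity
  have hnpos : 0 < n := by exact_mod_cast hn0
  haveI : NeZero n := ⟨hnpos.ne'⟩
  haveI : NeZero m := ⟨hmpos.ne'⟩
  have hnd : (n:ℝ) * d = 1 := by rw [hn]; field_simp
  have hNpos : 0 < N := by rw [hm]; positivity
  have hN0 : ((N:ℝ)) ≠ 0 := by positivity
  have hper2 : (m:ℝ) * ((n:ℝ)/(N:ℝ)) = 1 := by
    rw [hm]; push_cast; field_simp
  have hper2pos : (0:ℝ) < (n:ℝ)/(N:ℝ) := by positivity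
  -- coordinates of x
  have hx0 : ∀ q : Fin n × Fin m, x q 0 = ((q.1:ℕ):ℝ) * d := by
    intro q; rw [hx q]; rfl
  have hx1 : ∀ q : Fin n × Fin m, x q 1 = ((q.2:ℕ):ℝ) * ((n:ℝ)/(N:ℝ)) := by
    intro q; rw [hx q]; show ((q.2:ℕ):ℝ) * (n:ℝ) / (N:ℝ) = _; ring
  intro p
  suffices h : ∑ q ∈ univ.filter (· ≠ p), F (torusDiff (x p) (x q)) = 0 by
    rw [h, smul_zero]
  set σ : Fin n × Fin m → Fin n × Fin m := fun q => (p.1 + p.1 - q.1, p.2 + p.2 - q.2) with hσ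
  have hkey : ∀ q : Fin n × Fin m, ∀ i : Fin 2,
      torusDiff (x p) (x (σ q)) i = torusRep (-(x p i - x q i)) := by
    intro q i
    fin_cases i
    · show torusRep (x p 0 - x (σ q) 0) = torusRep (-(x p 0 - x q 0))
      rw [hx0, hx0, hx0]
      exact key_coord n d hnd p.1 q.1
    · show torusRep (x p 1 - x (σ q) 1) = torusRep (-(x p 1 - x q 1))
      rw [hx1, hx1, hx1]
      exact key_coord m ((n:ℝ)/(N:ℝ)) hper2 p.2 q.2
  have htd : ∀ q : Fin n × Fin m, ∀ i : Fin 2,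
      torusDiff (x p) (x q) i = torusRep (x p i - x q i) := fun q i => rfl
  have hhalf : ∀ q : Fin n × Fin m, ∀ i : Fin 2,
      torusDiff (x p) (x q) i = -(1/2) → F (torusDiff (x p) (x q)) = 0 := by
    intro q i h
    apply hcut
    calc (1/2 : ℝ) = |torusDiff (x p) (x q) i| := by rw [h]; rw [abs_neg, abs_of_pos]; norm_num
    _ ≤ _ := coord_le_norm _ i
  apply Finset.sum_involution (g := fun q _ => σ q)
  · -- sums cancel
    intro q hq
    by_cases hc : ∃ i : Fin 2, torusDiff (x p) (x q) i = -(1/2)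
    · obtain ⟨i, hi⟩ := hc
      rw [hhalf q i hi, hhalf (σ q) i ?_, add_zero]
      rw [hkey q i, torusRep_neg_of_eq _ (by rw [← htd q i]; exact hi)]
    · have hneg : torusDiff (x p) (x (σ q)) = -(torusDiff (x p) (x q)) := by
        refine PiLp.ext (fun i => ?_)
        show torusDiff (x p) (x (σ q)) i = -(torusDiff (x p) (x q) i)
        rw [hkey q i, htd q i]
        exact torusRep_neg_of_ne _ (fun h => hc ⟨i, (htd q i).trans h⟩)
      rw [hneg, hanti, add_neg_cancel]
  · -- non-fixed on support
    intro q hq hf hfix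
    by_cases hc : ∃ i : Fin 2, torusDiff (x p) (x q) i = -(1/2)
    · obtain ⟨i, hi⟩ := hc; exact hf (hhalf q i hi)
    · push_neg at hc
      have hz : ∀ i : Fin 2, ∃ k : ℤ, x p i - x q i = k := by
        intro i
        have h1 : torusRep (x p i - x q i) = torusRep (-(x p i - x q i)) := by
          rw [← htd q i, ← hkey q i, hfix]
        rw [torusRep_neg_of_ne _ (fun h => hc i ((htd q i).trans h))] at h1
        have h2 : torusRep (x p i - x q i) = 0 := by linarith
        exact torusRep_eq_zero _ h2
      have hq1 : q.1 = p.1 := by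
        obtain ⟨k, hk⟩ := hz 0
        rw [hx0, hx0] at hk
        have hb1 : |((p.1:ℕ):ℝ) - ((q.1:ℕ):ℝ)| < (n:ℝ) := by
          rw [abs_sub_lt_iff]
          constructor <;> [skip; skip] <;>
          · have h1 : ((p.1:ℕ):ℝ) < n := by exact_mod_cast p.1.isLt
            have h2 : ((q.1:ℕ):ℝ) < n := by exact_mod_cast q.1.isLt
            have h3 : (0:ℝ) ≤ ((p.1:ℕ):ℝ) := Nat.cast_nonneg _
            have h4 : (0:ℝ) ≤ ((q.1:ℕ):ℝ) := Nat.cast_nonneg _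
            linarith
        have habs : |(k:ℝ)| < 1 := by
          rw [← hk, show ((p.1:ℕ):ℝ) * d - ((q.1:ℕ):ℝ) * d = (((p.1:ℕ):ℝ) - ((q.1:ℕ):ℝ)) * d by ring,
            abs_mul, abs_of_pos hd]
          calc |((p.1:ℕ):ℝ) - ((q.1:ℕ):ℝ)| * d < (n:ℝ) * d :=
            mul_lt_mul_of_pos_right hb1 hd
          _ = 1 := hnd
        have hk0 : k = 0 := int_abs_lt_one k habs
        rw [hk0] at hk
        have : ((p.1:ℕ):ℝ) = ((q.1:ℕ):ℝ) := by
          have := sub_eq_zero.mp (by simpa using hk)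
          exact mul_right_cancel₀ hd.ne' this
        exact (Fin.val_injective (by exact_mod_cast this.symm))
      have hq2 : q.2 = p.2 := by
        obtain ⟨k, hk⟩ := hz 1
        rw [hx1, hx1] at hk
        have hb1 : |((p.2:ℕ):ℝ) - ((q.2:ℕ):ℝ)| < (m:ℝ) := by
          rw [abs_sub_lt_iff]
          constructor <;> [skip; skip] <;>
          · have h1 : ((p.2:ℕ):ℝ) < m := by exact_mod_cast p.2.isLt
            have h2 : ((q.2:ℕ):ℝ) < m := by exact_mod_cast q.2.isLt
            have h3 : (0:ℝ) ≤ ((p.2:ℕ):ℝ) := Nat.cast_nonneg _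
            have h4 : (0:ℝ) ≤ ((q.2:ℕ):ℝ) := Nat.cast_nonneg _
            linarith
        have habs : |(k:ℝ)| < 1 := by
          rw [← hk, show ((p.2:ℕ):ℝ) * ((n:ℝ)/(N:ℝ)) - ((q.2:ℕ):ℝ) * ((n:ℝ)/(N:ℝ))
              = (((p.2:ℕ):ℝ) - ((q.2:ℕ):ℝ)) * ((n:ℝ)/(N:ℝ)) by ring,
            abs_mul, abs_of_pos hper2pos]
          calc |((p.2:ℕ):ℝ) - ((q.2:ℕ):ℝ)| * ((n:ℝ)/(N:ℝ)) < (m:ℝ) * ((n:ℝ)/(N:ℝ)) :=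
            mul_lt_mul_of_pos_right hb1 hper2pos
          _ = 1 := hper2
        have hk0 : k = 0 := int_abs_lt_one k habs
        rw [hk0] at hk
        have : ((p.2:ℕ):ℝ) = ((q.2:ℕ):ℝ) := by
          have := sub_eq_zero.mp (by simpa using hk)
          exact mul_right_cancel₀ hper2pos.ne' this
        exact (Fin.val_injective (by exact_mod_cast this.symm))
      have : q = p := Prod.ext hq1 hq2
      rw [this] at hq
      simp at hq
  · -- maps into the set
    intro q hq
    simp only [mem_filter, mem_univ, true_and] at hq ⊢
    intro hσp
    apply hq
    have h1 : p.1 + p.1 - q.1 = p.1 := congrArg Prod.fst hσp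
    have h2 : p.2 + p.2 - q.2 = p.2 := congrArg Prod.snd hσp
    rw [sub_eq_iff_eq_add, add_right_inj] at h1 h2
    exact Prod.ext h1.symm h2.symm
  · -- involution
    intro q hq
    apply Prod.ext
    · exact sub_sub_cancel _ _
    · exact sub_sub_cancel _ _
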